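/- Let E ⊆ ℝⁿ be a compact set, t > 0, and δ ∈ (0, t) small enough that φ(δ) := arccos(1 − δ²/(2t²)) ≤ r₁ for a fixed r₁ ∈ (0,1). Let x ∈ ℝⁿ with d(x, E) = t, and let x₀ ∈ E attain this distance (|x − x₀| = t). Define the truncated sector A := { z : r₁ t ≤ |x₀ − z| ≤ r₂ t and (z − x₀)·(x − x₀) ≥ |x₀ − x|·|x₀ − z|·cos(a·φ(δ)) } for constants 0 < a < 1 and r₁ < r₂ < 1. Then A ∩ E = ∅; moreover every z ∈ A satisfies 0 < d(z, E) ≤ r₂ t < t, so A ⊆ {y : 0 < d(y, E) < t}. -/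

import Mathlib

open Metric Real

/-- A truncated sector based at a nearest point `x₀ ∈ E` of a point `x` at
distance `t` from the compact set `E` avoids `E` and lies in the set
`{y : 0 < d(y,E) < t}`. -/
theorem sector_avoids_compact {n : ℕ} (E : Set (EuclideanSpace ℝ (Fin n)))
    (hEcompact : IsCompact E) (t : ℝ) (ht : 0 < t)
    (δ : ℝ) (hδ0 : 0 < δ) (hδt : δ < t)
    (r₁ r₂ a : ℝ) (hr₁0 : 0 < r₁) (hr₁1 : r₁ < 1) (hr₁₂ : r₁ < r₂) (hr₂ : r₂ < 1)
    (ha0 : 0 < a) (ha1 : a < 1)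
    (hφ : Real.arccos (1 - δ ^ 2 / (2 * t ^ 2)) ≤ r₁)
    (x : EuclideanSpace ℝ (Fin n)) (hx : infDist x E = t)
    (x₀ : EuclideanSpace ℝ (Fin n)) (hx₀ : x₀ ∈ E) (hxx₀ : dist x x₀ = t)
    (A : Set (EuclideanSpace ℝ (Fin n)))
    (hA : A = {z | r₁ * t ≤ ‖x₀ - z‖ ∧ ‖x₀ - z‖ ≤ r₂ * t ∧
      ‖x₀ - x‖ * ‖x₀ - z‖ * Real.cos (a * Real.arccos (1 - δ ^ 2 / (2 * t ^ 2))) ≤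
        (inner ℝ (z - x₀) (x - x₀) : ℝ)}) :
    A ∩ E = ∅ ∧
      (∀ z ∈ A, 0 < infDist z E ∧ infDist z E ≤ r₂ * t) ∧ r₂ * t < t ∧
      A ⊆ {y | 0 < infDist y E ∧ infDist y E < t} := by
  set φ := Real.arccos (1 - δ ^ 2 / (2 * t ^ 2)) with hφdef
  have hφ0 : 0 ≤ φ := Real.arccos_nonneg _
  -- cos (a * φ) > 1/2
  have haφ0 : 0 ≤ a * φ := mul_nonneg ha0.le hφ0
  have haφ1 : a * φ < 1 := by nlinarith
  have hcos : (1 : ℝ) / 2 < Real.cos (a * φ) := by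
    have hπ : (1 : ℝ) < π / 3 := by
      have := Real.pi_gt_three; linarith
    calc (1 : ℝ) / 2 = Real.cos (π / 3) := Real.cos_pi_div_three.symm
      _ < Real.cos (a * φ) := by
          apply Real.cos_lt_cos_of_nonneg_of_le_pi haφ0
          · linarith [Real.pi_pos]
          · linarith
  -- every z ∈ A is strictly inside the ball of radius t around x
  have key : ∀ z ∈ A, dist x z < t := by
    intro z hz
    rw [hA] at hz
    obtain ⟨h1, h2, h3⟩ := hz
    have hs0 : 0 < ‖x₀ - z‖ := lt_of_lt_of_le (by positivity) h1
    have hxn : ‖x - x₀‖ = t := by rw [← dist_eq_norm]; exact hxx₀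
    have hx0n : ‖x₀ - x‖ = t := by rw [norm_sub_rev]; exact hxn
    have hzn : ‖z - x₀‖ = ‖x₀ - z‖ := norm_sub_rev _ _
    have hinner : (inner ℝ (x - x₀) (z - x₀) : ℝ) = inner ℝ (z - x₀) (x - x₀) :=
      real_inner_comm _ _
    have hnorm : ‖x - z‖ ^ 2 =
        ‖x - x₀‖ ^ 2 - 2 * (inner ℝ (x - x₀) (z - x₀) : ℝ) + ‖z - x₀‖ ^ 2 := by
      have e : x - z = (x - x₀) - (z - x₀) := by abel
      rw [e, norm_sub_sq_real]
    have hlt : ‖x - z‖ ^ 2 < t ^ 2 := by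
      rw [hnorm, hxn, hzn, hinner]
      rw [hx0n] at h3
      have hst : ‖x₀ - z‖ < t := lt_of_le_of_lt h2 (by nlinarith)
      nlinarith [h3, mul_pos (sub_pos.mpr hst) hs0,
        mul_pos (mul_pos (sub_pos.mpr hcos) ht) hs0]
    have hnn : 0 ≤ ‖x - z‖ := norm_nonneg _
    rw [dist_eq_norm]
    nlinarith
  have hAE : ∀ z ∈ A, z ∉ E := by
    intro z hz hzE
    have h1 : infDist x E ≤ dist x z := infDist_le_dist_of_mem hzE
    have h2 := key z hz
    linarith [hx ▸ h1]
  have hEne : E.Nonempty := ⟨x₀, hx₀⟩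
  have hdist : ∀ z ∈ A, 0 < infDist z E ∧ infDist z E ≤ r₂ * t := by
    intro z hz
    constructor
    · exact (hEcompact.isClosed.notMem_iff_infDist_pos hEne).mp (hAE z hz)
    · have h1 : infDist z E ≤ dist z x₀ := infDist_le_dist_of_mem hx₀
      have h2 : dist z x₀ = ‖x₀ - z‖ := by rw [dist_eq_norm, norm_sub_rev]
      rw [hA] at hz
      linarith [hz.2.1, h1, h2 ▸ h1]
  have hr₂t : r₂ * t < t := by nlinarith
  refine ⟨?_, hdist, hr₂t, ?_⟩
  · ext z
    simp only [Set.mem_inter_iff, Set.mem_empty_iff_false, iff_false, not_and]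
    exact fun hz => hAE z hz
  · intro z hz
    obtain ⟨h1, h2⟩ := hdist z hz
    exact ⟨h1, lt_of_le_of_lt h2 hr₂t⟩
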